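/- arXiv:1512.01792 — 2 statements merged into one kernel-verified Lean document; each statement's English description precedes it below -/
import Mathlib

section
/- Let F be a distribution on [0,∞) with F ∈ OS but F ∉ L(γ) for some γ ≥ 0, and suppose liminf_{x→∞} F̄(x-t)/F̄(x) ≥ e^{γt} for all t > 0. Then F^{*k} ∉ L(γ) for every integer k ≥ 2. -/
open MeasureTheory Filter Set Asymptotics

/-- The tail `F̄(x) = μ((x,∞))` of a distribution `μ` on `ℝ`. -/
noncomputable def tail (μ : MeasureTheory.Measure ℝ) (x : ℝ) : ℝ := (μ (Set.Ioi x)).toReal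

/-- Convolution of two distributions on `ℝ`. -/
noncomputable def mconv (μ ν : MeasureTheory.Measure ℝ) : MeasureTheory.Measure ℝ :=
  MeasureTheory.Measure.map (fun p : ℝ × ℝ => p.1 + p.2) (μ.prod ν)

/-- `iconv μ k` is the `k`-fold convolution `μ^{*k}` (with `μ^{*0} = δ₀`). -/
noncomputable def iconv (μ : MeasureTheory.Measure ℝ) : ℕ → MeasureTheory.Measure ℝ
  | 0 => MeasureTheory.Measure.dirac 0
  | n + 1 => mconv (iconv μ n) μ

/-- The class `L(γ)`: `F̄(x-t) ~ e^{γt} F̄(x)` as `x → ∞`, for every `t`. -/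
def MemL (γ : ℝ) (μ : MeasureTheory.Measure ℝ) : Prop :=
  ∀ t : ℝ, Filter.Tendsto (fun x => tail μ (x - t) / tail μ x) Filter.atTop
    (nhds (Real.exp (γ * t)))

/-- The class `OS`: `limsup_{x→∞} (F*F)̄(x) / F̄(x) < ∞`. -/
def MemOS (μ : MeasureTheory.Measure ℝ) : Prop :=
  Filter.IsBoundedUnder (· ≤ ·) Filter.atTop (fun x => tail (mconv μ μ) x / tail μ x)

open scoped ENNReal NNReal

section Infra

variable {μ ν : Measure ℝ}

lemma measurable_addfun : Measurable (fun p : ℝ × ℝ => p.1 + p.2) :=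
  measurable_fst.add measurable_snd

instance mconv_prob [IsProbabilityMeasure μ] [IsProbabilityMeasure ν] :
    IsProbabilityMeasure (mconv μ ν) := by
  unfold mconv
  exact Measure.isProbabilityMeasure_map measurable_addfun.aemeasurable

instance iconv_prob (F : Measure ℝ) [IsProbabilityMeasure F] (k : ℕ) :
    IsProbabilityMeasure (iconv F k) := by
  induction k with
  | zero => exact MeasureTheory.Measure.dirac.isProbabilityMeasure
  | succ n ih => exact @mconv_prob _ _ ih _

lemma mconv_apply_Ioi [IsProbabilityMeasure μ] [IsProbabilityMeasure ν] (x : ℝ) :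
    mconv μ ν (Set.Ioi x) = ∫⁻ y, ν (Set.Ioi (x - y)) ∂μ := by
  unfold mconv
  rw [Measure.map_apply measurable_addfun measurableSet_Ioi]
  rw [Measure.prod_apply (measurable_addfun measurableSet_Ioi)]
  congr 1
  ext y
  congr 1
  ext w
  simp only [Set.mem_preimage, Set.mem_Ioi, Set.mem_setOf_eq]
  constructor <;> intro h <;> linarith

lemma mconv_comm [IsProbabilityMeasure μ] [IsProbabilityMeasure ν] :
    mconv μ ν = mconv ν μ := by
  unfold mconv
  rw [← Measure.prod_swap]
  rw [Measure.map_map measurable_addfun measurable_swap]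
  congr 1
  ext p
  simp [Function.comp, add_comm]

lemma tail_nonneg (x : ℝ) : 0 ≤ tail μ x := ENNReal.toReal_nonneg

lemma tl_ne_top [IsProbabilityMeasure μ] (s : Set ℝ) : μ s ≠ ⊤ :=
  (measure_lt_top μ s).ne

lemma tail_le_one [IsProbabilityMeasure μ] (x : ℝ) : tail μ x ≤ 1 := by
  unfold tail
  rw [← ENNReal.toReal_one]
  exact ENNReal.toReal_mono ENNReal.one_ne_top prob_le_one

lemma tl_antitone : Antitone (fun x => μ (Set.Ioi x)) := by
  intro a b hab
  exact measure_mono (Set.Ioi_subset_Ioi hab)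

lemma tail_antitone [IsProbabilityMeasure μ] : Antitone (tail μ) := by
  intro a b hab
  exact ENNReal.toReal_mono (tl_ne_top _) (tl_antitone hab)

lemma tail_eq_toReal (x : ℝ) : tail μ x = (μ (Set.Ioi x)).toReal := rfl

lemma ofReal_tail [IsProbabilityMeasure μ] (x : ℝ) :
    ENNReal.ofReal (tail μ x) = μ (Set.Ioi x) := ENNReal.ofReal_toReal (tl_ne_top _)

lemma tail_eq_one_of_neg [IsProbabilityMeasure μ] (hsupp : μ (Set.Iio 0) = 0)
    {x : ℝ} (hx : x < 0) : tail μ x = 1 := by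
  have h1 : μ (Set.Iic x) = 0 := by
    have := measure_mono (μ := μ) (Set.Iic_subset_Iio.mpr hx)
    exact le_antisymm (le_trans this hsupp.le) zero_le
  have h2 : μ (Set.Ioi x) = 1 := by
    have := measure_add_measure_compl (μ := μ) (measurableSet_Iic (a := x))
    rw [Set.compl_Iic, h1, zero_add, measure_univ] at this
    exact this
  rw [tail_eq_toReal, h2, ENNReal.toReal_one]

lemma iconv_Iio (F : Measure ℝ) [IsProbabilityMeasure F] (hs : F (Set.Iio 0) = 0) (k : ℕ) :
    iconv F k (Set.Iio 0) = 0 := by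
  induction k with
  | zero =>
      simp [iconv, Measure.dirac_apply' _ measurableSet_Iio]
  | succ n ih =>
      show mconv (iconv F n) F (Set.Iio 0) = 0
      unfold mconv
      rw [Measure.map_apply measurable_addfun measurableSet_Iio]
      have hsub : (fun p : ℝ × ℝ => p.1 + p.2) ⁻¹' (Set.Iio 0) ⊆
          (Set.Iio 0 ×ˢ (Set.univ : Set ℝ)) ∪ ((Set.univ : Set ℝ) ×ˢ Set.Iio 0) := by
        rintro ⟨a, b⟩ hab
        simp only [Set.mem_preimage, Set.mem_Iio] at hab
        by_cases ha : a < 0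
        · exact Or.inl (by simp [ha])
        · right
          simp only [Set.mem_prod, Set.mem_univ, Set.mem_Iio, true_and]
          push_neg at ha; linarith
      refine le_antisymm (le_trans (measure_mono hsub) ?_) zero_le
      refine le_trans (measure_union_le _ _) ?_
      rw [Measure.prod_prod, Measure.prod_prod, ih, hs]
      simp

lemma iconv_one (F : Measure ℝ) [IsProbabilityMeasure F] : iconv F 1 = F := by
  show mconv (Measure.dirac 0) F = F
  unfold mconv
  rw [Measure.dirac_prod]
  rw [Measure.map_map measurable_addfun measurable_prodMk_left]
  have : ((fun p : ℝ × ℝ => p.1 + p.2) ∘ (Prod.mk (0:ℝ))) = id := by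
    funext x; simp
  rw [this, Measure.map_id]

end Infra

section Infra2

variable {μ ν : Measure ℝ}

lemma swap_piece [IsProbabilityMeasure μ] [IsProbabilityMeasure ν] (a x : ℝ) :
    ∫⁻ y in Set.Ioi a, ν (Set.Ioi (x - y)) ∂μ
      = ∫⁻ w, μ (Set.Ioi (max a (x - w))) ∂ν := by
  set S : Set (ℝ × ℝ) := {p | a < p.1 ∧ x < p.1 + p.2} with hSdef
  have hS : MeasurableSet S := by
    apply MeasurableSet.inter
    · exact measurable_fst measurableSet_Ioi
    · exact measurable_addfun measurableSet_Ioi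
  have hL : (μ.prod ν) S = ∫⁻ y in Set.Ioi a, ν (Set.Ioi (x - y)) ∂μ := by
    rw [Measure.prod_apply hS]
    rw [← lintegral_indicator measurableSet_Ioi]
    congr 1
    funext y
    by_cases hy : a < y
    · have : Prod.mk y ⁻¹' S = Set.Ioi (x - y) := by
        ext w
        simp only [hSdef, Set.mem_preimage, Set.mem_setOf_eq, Set.mem_Ioi]
        constructor
        · rintro ⟨_, h⟩; linarith
        · intro h; exact ⟨hy, by linarith⟩
      rw [this, Set.indicator_of_mem (Set.mem_Ioi.mpr hy)]
    · have : Prod.mk y ⁻¹' S = ∅ := by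
        ext w
        simp only [hSdef, Set.mem_preimage, Set.mem_setOf_eq, Set.mem_empty_iff_false,
          iff_false, not_and]
        intro h; exact absurd h hy
      rw [this, Set.indicator_of_notMem (by simpa using hy)]
      simp
  have hR : (μ.prod ν) S = ∫⁻ w, μ (Set.Ioi (max a (x - w))) ∂ν := by
    have hswap : (μ.prod ν) S = (ν.prod μ) (Prod.swap ⁻¹' S) := by
      rw [← Measure.prod_swap, Measure.map_apply measurable_swap hS]
    rw [hswap, Measure.prod_apply (hS.preimage measurable_swap)]
    congr 1
    funext w
    congr 1
    ext y
    simp only [hSdef, Set.mem_preimage, Prod.swap_prod_mk, Set.mem_setOf_eq, Set.mem_Ioi,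
      max_lt_iff]
    constructor
    · rintro ⟨h1, h2⟩; exact ⟨h1, by linarith⟩
    · rintro ⟨h1, h2⟩; exact ⟨h1, by linarith⟩
  rw [← hL, hR]

lemma mconv_apply_Ioi' [IsProbabilityMeasure μ] [IsProbabilityMeasure ν] (x : ℝ) :
    mconv μ ν (Set.Ioi x) = ∫⁻ w, μ (Set.Ioi (x - w)) ∂ν := by
  rw [mconv_comm, mconv_apply_Ioi]

lemma mconv_tail_ge_mul [IsProbabilityMeasure μ] [IsProbabilityMeasure ν] (x s : ℝ) :
    μ (Set.Ioi (x - s)) * ν (Set.Ioi s) ≤ mconv μ ν (Set.Ioi x) := by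
  rw [mconv_apply_Ioi]
  calc μ (Set.Ioi (x - s)) * ν (Set.Ioi s)
      = ∫⁻ _ in Set.Ioi (x - s), ν (Set.Ioi s) ∂μ := by
        rw [setLIntegral_const, mul_comm]
    _ ≤ ∫⁻ y in Set.Ioi (x - s), ν (Set.Ioi (x - y)) ∂μ := by
        apply setLIntegral_mono' measurableSet_Ioi
        intro y hy
        apply measure_mono
        apply Set.Ioi_subset_Ioi
        simp only [Set.mem_Ioi] at hy
        linarith
    _ ≤ ∫⁻ y, ν (Set.Ioi (x - y)) ∂μ := setLIntegral_le_lintegral _ _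

lemma mconv_tail_ge [IsProbabilityMeasure μ] [IsProbabilityMeasure ν]
    (hsupp : μ (Set.Iio 0) = 0) (x : ℝ) :
    ν (Set.Ioi x) ≤ mconv μ ν (Set.Ioi x) := by
  rw [mconv_apply_Ioi]
  have hae : ∀ᵐ y ∂μ, 0 ≤ y := by
    rw [ae_iff]
    simp only [not_le]
    exact hsupp
  calc ν (Set.Ioi x) = ∫⁻ _, ν (Set.Ioi x) ∂μ := by simp
    _ ≤ ∫⁻ y, ν (Set.Ioi (x - y)) ∂μ := by
        apply lintegral_mono_ae
        filter_upwards [hae] with y hy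
        apply measure_mono
        apply Set.Ioi_subset_Ioi
        linarith

end Infra2

section Core

variable {H F : Measure ℝ} [IsProbabilityMeasure H] [IsProbabilityMeasure F]

lemma meas_tailfun (ρ : Measure ℝ) (x : ℝ) : Measurable (fun y : ℝ => ρ (Set.Ioi (x - y))) := by
  have h1 : Antitone (fun z : ℝ => ρ (Set.Ioi z)) := tl_antitone
  have h2 : Monotone (fun y : ℝ => ρ (Set.Ioi (x - y))) := by
    intro a b hab
    exact h1 (by linarith)
  exact h2.measurable

/-- Core splitting inequality, `γ = 0` style (no boundary term). -/
lemma core0 (x T : ℝ) (r c : ℝ≥0∞) (B : Set ℝ) (hB : MeasurableSet B)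
    (h1 : ∀ y : ℝ, r * F (Set.Ioi (x - y)) ≤ F (Set.Ioi (x - T - y)))
    (hbump : ∀ y ∈ B, r * F (Set.Ioi (x - y)) + c * F (Set.Ioi x) ≤ F (Set.Ioi (x - T - y))) :
    r * mconv H F (Set.Ioi x) + c * F (Set.Ioi x) * H B ≤ mconv H F (Set.Ioi (x - T)) := by
  rw [mconv_apply_Ioi, mconv_apply_Ioi]
  have hsplit1 : ∫⁻ y, F (Set.Ioi (x - y)) ∂H
      = ∫⁻ y in B, F (Set.Ioi (x - y)) ∂H + ∫⁻ y in Bᶜ, F (Set.Ioi (x - y)) ∂H :=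
    (lintegral_add_compl _ hB).symm
  have hsplit2 : ∫⁻ y, F (Set.Ioi (x - T - y)) ∂H
      = ∫⁻ y in B, F (Set.Ioi (x - T - y)) ∂H + ∫⁻ y in Bᶜ, F (Set.Ioi (x - T - y)) ∂H :=
    (lintegral_add_compl _ hB).symm
  rw [hsplit1, hsplit2]
  have e1 : r * (∫⁻ y in B, F (Set.Ioi (x - y)) ∂H + ∫⁻ y in Bᶜ, F (Set.Ioi (x - y)) ∂H)
      = r * ∫⁻ y in B, F (Set.Ioi (x - y)) ∂H + r * ∫⁻ y in Bᶜ, F (Set.Ioi (x - y)) ∂H :=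
    mul_add _ _ _
  rw [e1]
  have hBc : r * ∫⁻ y in B, F (Set.Ioi (x - y)) ∂H + c * F (Set.Ioi x) * H B
      ≤ ∫⁻ y in B, F (Set.Ioi (x - T - y)) ∂H := by
    have : r * ∫⁻ y in B, F (Set.Ioi (x - y)) ∂H + c * F (Set.Ioi x) * H B
        = ∫⁻ y in B, (r * F (Set.Ioi (x - y)) + c * F (Set.Ioi x)) ∂H := by
      rw [lintegral_add_right _ measurable_const, lintegral_const,
        lintegral_const_mul _ (meas_tailfun F x), Measure.restrict_apply_univ]
    rw [this]
    exact setLIntegral_mono' hB hbump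
  have hrest : r * ∫⁻ y in Bᶜ, F (Set.Ioi (x - y)) ∂H
      ≤ ∫⁻ y in Bᶜ, F (Set.Ioi (x - T - y)) ∂H := by
    rw [← lintegral_const_mul _ (meas_tailfun F x)]
    exact setLIntegral_mono' hB.compl (fun y _ => h1 y)
  calc r * ∫⁻ y in B, F (Set.Ioi (x - y)) ∂H + r * ∫⁻ y in Bᶜ, F (Set.Ioi (x - y)) ∂H
        + c * F (Set.Ioi x) * H B
      = (r * ∫⁻ y in B, F (Set.Ioi (x - y)) ∂H + c * F (Set.Ioi x) * H B)
        + r * ∫⁻ y in Bᶜ, F (Set.Ioi (x - y)) ∂H := by ring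
    _ ≤ ∫⁻ y in B, F (Set.Ioi (x - T - y)) ∂H + ∫⁻ y in Bᶜ, F (Set.Ioi (x - T - y)) ∂H :=
        add_le_add hBc hrest

/-- Core splitting inequality with boundary term (for `γ > 0`). -/
lemma core (x T M : ℝ) (hT : 0 < T) (r c : ℝ≥0∞) (B : Set ℝ) (hB : MeasurableSet B)
    (hBsub : B ⊆ Set.Iic (x - M))
    (h1 : ∀ y ∈ Set.Iic (x - M), r * F (Set.Ioi (x - y)) ≤ F (Set.Ioi (x - T - y)))
    (h2 : ∀ w ∈ Set.Iic (M - T), r * H (Set.Ioi (x - w)) ≤ H (Set.Ioi (x - T - w)))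
    (hbump : ∀ y ∈ B, r * F (Set.Ioi (x - y)) + c * F (Set.Ioi x) ≤ F (Set.Ioi (x - T - y))) :
    r * mconv H F (Set.Ioi x) + c * F (Set.Ioi x) * H B
      ≤ mconv H F (Set.Ioi (x - T)) + r * (H (Set.Ioi (x - M)) * F (Set.Ioi (M - T))) := by
  have hIic : MeasurableSet (Set.Iic (x - M)) := measurableSet_Iic
  -- decompose both convolution tails at level x-M
  have hGx : mconv H F (Set.Ioi x)
      = ∫⁻ y in Set.Iic (x - M), F (Set.Ioi (x - y)) ∂H
        + ∫⁻ y in Set.Ioi (x - M), F (Set.Ioi (x - y)) ∂H := by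
    rw [mconv_apply_Ioi, ← Set.compl_Iic, lintegral_add_compl _ hIic]
  have hGxT : mconv H F (Set.Ioi (x - T))
      = ∫⁻ y in Set.Iic (x - M), F (Set.Ioi (x - T - y)) ∂H
        + ∫⁻ y in Set.Ioi (x - M), F (Set.Ioi (x - T - y)) ∂H := by
    rw [mconv_apply_Ioi, ← Set.compl_Iic, lintegral_add_compl _ hIic]
  -- swap the outer pieces
  have hswx : ∫⁻ y in Set.Ioi (x - M), F (Set.Ioi (x - y)) ∂H
      = ∫⁻ w, H (Set.Ioi (max (x - M) (x - w))) ∂F := swap_piece _ _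
  have hswxT : ∫⁻ y in Set.Ioi (x - M), F (Set.Ioi (x - T - y)) ∂H
      = ∫⁻ w, H (Set.Ioi (max (x - M) (x - T - w))) ∂F := by
    exact swap_piece (μ := H) (ν := F) (x - M) (x - T)
  -- bound the x-side swapped piece
  have hxbound : ∫⁻ w, H (Set.Ioi (max (x - M) (x - w))) ∂F
      ≤ ∫⁻ w in Set.Iic (M - T), H (Set.Ioi (x - w)) ∂F
        + H (Set.Ioi (x - M)) * F (Set.Ioi (M - T)) := by
    rw [← lintegral_add_compl (μ := F)
      (f := fun w => H (Set.Ioi (max (x - M) (x - w))))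
      (measurableSet_Iic : MeasurableSet (Set.Iic (M - T)))]
    apply add_le_add
    · apply setLIntegral_mono' measurableSet_Iic
      intro w _
      exact measure_mono (Set.Ioi_subset_Ioi (le_max_right _ _))
    · rw [Set.compl_Iic]
      calc ∫⁻ w in Set.Ioi (M - T), H (Set.Ioi (max (x - M) (x - w))) ∂F
          ≤ ∫⁻ _ in Set.Ioi (M - T), H (Set.Ioi (x - M)) ∂F := by
            apply setLIntegral_mono' measurableSet_Ioi
            intro w _
            exact measure_mono (Set.Ioi_subset_Ioi (le_max_left _ _))
        _ = H (Set.Ioi (x - M)) * F (Set.Ioi (M - T)) := setLIntegral_const _ _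
  -- bound the (x-T)-side swapped piece from below
  have hxTbound : ∫⁻ w in Set.Iic (M - T), H (Set.Ioi (x - T - w)) ∂F
      ≤ ∫⁻ w, H (Set.Ioi (max (x - M) (x - T - w))) ∂F := by
    calc ∫⁻ w in Set.Iic (M - T), H (Set.Ioi (x - T - w)) ∂F
        = ∫⁻ w in Set.Iic (M - T), H (Set.Ioi (max (x - M) (x - T - w))) ∂F := by
          apply setLIntegral_congr_fun measurableSet_Iic
          intro w hw
          simp only [Set.mem_Iic] at hw
          beta_reduce
          congr 2
          rw [max_eq_right (by linarith)]
      _ ≤ ∫⁻ w, H (Set.Ioi (max (x - M) (x - T - w))) ∂F := setLIntegral_le_lintegral _ _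
  -- inner piece: split B off Iic (x - M)
  have hinner : r * ∫⁻ y in Set.Iic (x - M), F (Set.Ioi (x - y)) ∂H + c * F (Set.Ioi x) * H B
      ≤ ∫⁻ y in Set.Iic (x - M), F (Set.Ioi (x - T - y)) ∂H := by
    have hdecomp : Set.Iic (x - M) = B ∪ (Set.Iic (x - M) \ B) := (Set.union_diff_cancel hBsub).symm
    have hdisj : Disjoint B (Set.Iic (x - M) \ B) := Set.disjoint_sdiff_right.mono_left le_rfl
    have hDm : MeasurableSet (Set.Iic (x - M) \ B) := hIic.diff hB
    rw [hdecomp, lintegral_union hDm hdisj, lintegral_union hDm hdisj]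
    have hBpart : r * ∫⁻ y in B, F (Set.Ioi (x - y)) ∂H + c * F (Set.Ioi x) * H B
        ≤ ∫⁻ y in B, F (Set.Ioi (x - T - y)) ∂H := by
      have : r * ∫⁻ y in B, F (Set.Ioi (x - y)) ∂H + c * F (Set.Ioi x) * H B
          = ∫⁻ y in B, (r * F (Set.Ioi (x - y)) + c * F (Set.Ioi x)) ∂H := by
        rw [lintegral_add_right _ measurable_const, lintegral_const,
          lintegral_const_mul _ (meas_tailfun F x), Measure.restrict_apply_univ]
      rw [this]
      exact setLIntegral_mono' hB hbump
    have hDpart : r * ∫⁻ y in Set.Iic (x - M) \ B, F (Set.Ioi (x - y)) ∂H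
        ≤ ∫⁻ y in Set.Iic (x - M) \ B, F (Set.Ioi (x - T - y)) ∂H := by
      rw [← lintegral_const_mul _ (meas_tailfun F x)]
      exact setLIntegral_mono' hDm (fun y hy => h1 y hy.1)
    calc r * (∫⁻ y in B, F (Set.Ioi (x - y)) ∂H
          + ∫⁻ y in Set.Iic (x - M) \ B, F (Set.Ioi (x - y)) ∂H) + c * F (Set.Ioi x) * H B
        = (r * ∫⁻ y in B, F (Set.Ioi (x - y)) ∂H + c * F (Set.Ioi x) * H B)
          + r * ∫⁻ y in Set.Iic (x - M) \ B, F (Set.Ioi (x - y)) ∂H := by ring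
      _ ≤ _ := add_le_add hBpart hDpart
  -- outer piece bound
  have houter : r * ∫⁻ w in Set.Iic (M - T), H (Set.Ioi (x - w)) ∂F
      ≤ ∫⁻ w in Set.Iic (M - T), H (Set.Ioi (x - T - w)) ∂F := by
    rw [← lintegral_const_mul _ (meas_tailfun H x)]
    exact setLIntegral_mono' measurableSet_Iic h2
  -- assemble
  calc r * mconv H F (Set.Ioi x) + c * F (Set.Ioi x) * H B
      = r * ∫⁻ y in Set.Iic (x - M), F (Set.Ioi (x - y)) ∂H + c * F (Set.Ioi x) * H B
        + r * ∫⁻ y in Set.Ioi (x - M), F (Set.Ioi (x - y)) ∂H := by rw [hGx]; ring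
    _ ≤ r * ∫⁻ y in Set.Iic (x - M), F (Set.Ioi (x - y)) ∂H + c * F (Set.Ioi x) * H B
        + r * (∫⁻ w in Set.Iic (M - T), H (Set.Ioi (x - w)) ∂F
          + H (Set.Ioi (x - M)) * F (Set.Ioi (M - T))) := by
        refine add_le_add le_rfl ?_
        rw [hswx]
        exact mul_le_mul_right hxbound r
    _ = (r * ∫⁻ y in Set.Iic (x - M), F (Set.Ioi (x - y)) ∂H + c * F (Set.Ioi x) * H B)
        + r * ∫⁻ w in Set.Iic (M - T), H (Set.Ioi (x - w)) ∂F
        + r * (H (Set.Ioi (x - M)) * F (Set.Ioi (M - T))) := by ring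
    _ ≤ ∫⁻ y in Set.Iic (x - M), F (Set.Ioi (x - T - y)) ∂H
        + ∫⁻ w in Set.Iic (M - T), H (Set.Ioi (x - T - w)) ∂F
        + r * (H (Set.Ioi (x - M)) * F (Set.Ioi (M - T))) :=
        add_le_add (add_le_add hinner houter) le_rfl
    _ ≤ ∫⁻ y in Set.Iic (x - M), F (Set.Ioi (x - T - y)) ∂H
        + ∫⁻ w, H (Set.Ioi (max (x - M) (x - T - w))) ∂F
        + r * (H (Set.Ioi (x - M)) * F (Set.Ioi (M - T))) :=
        add_le_add (add_le_add le_rfl hxTbound) le_rfl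
    _ = mconv H F (Set.Ioi (x - T)) + r * (H (Set.Ioi (x - M)) * F (Set.Ioi (M - T))) := by
        rw [hGxT, hswxT]

end Core

section Analytic

variable {F : Measure ℝ} [IsProbabilityMeasure F] {γ : ℝ}

/-- helper: scalar multiplication conversion real → ENNReal -/
lemma ofReal_tail_le {ρ σ : Measure ℝ} [IsProbabilityMeasure ρ] [IsProbabilityMeasure σ]
    {a : ℝ} (ha : 0 ≤ a) {zr zs : ℝ} (h : a * tail ρ zr ≤ tail σ zs) :
    ENNReal.ofReal a * ρ (Set.Ioi zr) ≤ σ (Set.Ioi zs) := by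
  rw [← ofReal_tail, ← ofReal_tail, ← ENNReal.ofReal_mul ha]
  exact ENNReal.ofReal_le_ofReal h

lemma f_pos (hlim : ∀ t > (0 : ℝ),
      Real.exp (γ * t) ≤ Filter.liminf (fun x => tail F (x - t) / tail F x) Filter.atTop) :
    ∀ x : ℝ, 0 < tail F x := by
  by_contra h
  push_neg at h
  obtain ⟨x0, hx0⟩ := h
  have h0 : tail F x0 = 0 := le_antisymm hx0 (tail_nonneg _)
  have hz : ∀ x ≥ x0, tail F x = 0 := fun x hx =>
    le_antisymm (h0 ▸ tail_antitone hx) (tail_nonneg _)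
  have hev : ∀ᶠ x in atTop, (fun x => tail F (x - 1) / tail F x) x = (fun _ => (0:ℝ)) x := by
    rw [eventually_atTop]
    exact ⟨x0, fun x hx => by simp [hz x hx, div_zero]⟩
  have := hlim 1 one_pos
  rw [liminf_congr hev, liminf_const] at this
  exact absurd this (not_le.mpr (Real.exp_pos _))

lemma hlim_ev (hlim : ∀ t > (0 : ℝ),
      Real.exp (γ * t) ≤ Filter.liminf (fun x => tail F (x - t) / tail F x) Filter.atTop)
    {t ε : ℝ} (ht : 0 < t) (hε : 0 < ε) :
    ∃ Z : ℝ, ∀ x ≥ Z, (Real.exp (γ * t) - ε) * tail F x ≤ tail F (x - t) := by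
  have hfp := f_pos hlim
  have h1 : Real.exp (γ * t) - ε < liminf (fun x => tail F (x - t) / tail F x) atTop :=
    lt_of_lt_of_le (by linarith) (hlim t ht)
  have hb : IsBoundedUnder (· ≥ ·) atTop (fun x => tail F (x - t) / tail F x) :=
    Filter.isBoundedUnder_of ⟨0, fun x => div_nonneg (tail_nonneg _) (tail_nonneg _)⟩
  have hev := Filter.eventually_lt_of_lt_liminf h1 hb
  rw [eventually_atTop] at hev
  obtain ⟨Z, hZ⟩ := hev
  exact ⟨Z, fun x hx => ((lt_div_iff₀ (hfp x)).mp (hZ x hx)).le⟩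

lemma os_pack (hOS : MemOS F)
    (hlim : ∀ t > (0 : ℝ),
      Real.exp (γ * t) ≤ Filter.liminf (fun x => tail F (x - t) / tail F x) Filter.atTop) :
    ∃ C₂ : ℝ, 1 ≤ C₂ ∧ ∃ x₀ : ℝ, ∀ x ≥ x₀, tail (mconv F F) x ≤ C₂ * tail F x := by
  obtain ⟨b, hb⟩ := hOS
  rw [eventually_map, eventually_atTop] at hb
  obtain ⟨x₀, hx₀⟩ := hb
  refine ⟨max b 1, le_max_right _ _, x₀, fun x hx => ?_⟩
  have h1 := hx₀ x hx
  have h2 : tail (mconv F F) x / tail F x ≤ max b 1 := le_trans h1 (le_max_left _ _)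
  exact (div_le_iff₀ (f_pos hlim x)).mp h2

lemma shift_bd (hlim : ∀ t > (0 : ℝ),
      Real.exp (γ * t) ≤ Filter.liminf (fun x => tail F (x - t) / tail F x) Filter.atTop)
    {C₂ x₀ : ℝ} (hos : ∀ x ≥ x₀, tail (mconv F F) x ≤ C₂ * tail F x)
    {S : ℝ} {x s : ℝ} (hs0 : 0 ≤ s) (hsS : s ≤ S) (hx : x₀ ≤ x) :
    tail F (x - s) ≤ C₂ / tail F S * tail F x := by
  have hfp := f_pos hlim
  have h1 : tail F (x - s) * tail F s ≤ tail (mconv F F) x := by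
    have := mconv_tail_ge_mul (μ := F) (ν := F) x s
    have h2 := ENNReal.toReal_mono (tl_ne_top _) this
    rw [ENNReal.toReal_mul] at h2
    exact h2
  have h3 : tail F (x - s) * tail F S ≤ C₂ * tail F x := by
    calc tail F (x - s) * tail F S ≤ tail F (x - s) * tail F s := by
          apply mul_le_mul_of_nonneg_left (tail_antitone hsS) (tail_nonneg _)
      _ ≤ tail (mconv F F) x := h1
      _ ≤ C₂ * tail F x := hos x hx
  rw [div_mul_eq_mul_div, le_div_iff₀ (hfp S)]
  linarith [h3]

lemma h_ge (hs : F (Set.Iio 0) = 0) (m : ℕ) (x : ℝ) :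
    tail F x ≤ tail (iconv F (m + 1)) x := by
  have : iconv F (m + 1) = mconv (iconv F m) F := rfl
  rw [this]
  exact ENNReal.toReal_mono (tl_ne_top _) (mconv_tail_ge (iconv_Iio F hs m) x)

lemma h_pos (hs : F (Set.Iio 0) = 0)
    (hlim : ∀ t > (0 : ℝ),
      Real.exp (γ * t) ≤ Filter.liminf (fun x => tail F (x - t) / tail F x) Filter.atTop)
    (m : ℕ) (x : ℝ) : 0 < tail (iconv F (m + 1)) x :=
  lt_of_lt_of_le (f_pos hlim x) (h_ge hs m x)

lemma Ck_bound (hs : F (Set.Iio 0) = 0) (hOS : MemOS F)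
    (hlim : ∀ t > (0 : ℝ),
      Real.exp (γ * t) ≤ Filter.liminf (fun x => tail F (x - t) / tail F x) Filter.atTop) :
    ∀ j : ℕ, ∃ C : ℝ, 1 ≤ C ∧ ∃ xj : ℝ, ∀ x ≥ xj, tail (iconv F (j + 1)) x ≤ C * tail F x := by
  obtain ⟨C₂, hC₂, x₀, hos⟩ := os_pack hOS hlim
  have hfp := f_pos hlim
  intro j
  induction j with
  | zero =>
      exact ⟨1, le_rfl, 0, fun x _ => by rw [iconv_one, one_mul]⟩
  | succ j ih =>
      obtain ⟨C, hC1, xj, hCj⟩ := ih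
      set a : ℝ := max xj 1 with ha
      refine ⟨C * C₂ + C₂ / tail F a, ?_, max x₀ 0, fun x hx => ?_⟩
      · have h1 : 0 ≤ C₂ / tail F a := div_nonneg (by linarith) (tail_nonneg _)
        nlinarith
      · have hxx0 : x₀ ≤ x := le_trans (le_max_left _ _) hx
        set Hm := iconv F (j + 1) with hHm
        haveI : IsProbabilityMeasure Hm := iconv_prob F (j + 1)
        have e1 : iconv F (j + 2) (Set.Ioi x) = ∫⁻ w, Hm (Set.Ioi (x - w)) ∂F := by
          show mconv (iconv F (j+1)) F (Set.Ioi x) = _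
          rw [mconv_apply_Ioi']
        have esplit : ∫⁻ w, Hm (Set.Ioi (x - w)) ∂F
            = ∫⁻ w in Set.Iic (x - a), Hm (Set.Ioi (x - w)) ∂F
              + ∫⁻ w in Set.Ioi (x - a), Hm (Set.Ioi (x - w)) ∂F := by
          rw [← Set.compl_Iic, lintegral_add_compl _ measurableSet_Iic]
        have hP1 : ∫⁻ w in Set.Iic (x - a), Hm (Set.Ioi (x - w)) ∂F
            ≤ ENNReal.ofReal C * ENNReal.ofReal (C₂ * tail F x) := by
          have step1 : ∫⁻ w in Set.Iic (x - a), Hm (Set.Ioi (x - w)) ∂F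
              ≤ ∫⁻ w in Set.Iic (x - a), ENNReal.ofReal C * F (Set.Ioi (x - w)) ∂F := by
            apply setLIntegral_mono' measurableSet_Iic
            intro w hw
            simp only [Set.mem_Iic] at hw
            have hxw : xj ≤ x - w := by
              have : a ≤ x - w := by linarith
              exact le_trans (le_max_left _ _) this
            have := hCj (x - w) hxw
            calc Hm (Set.Ioi (x - w)) = ENNReal.ofReal (tail Hm (x - w)) := (ofReal_tail _).symm
              _ ≤ ENNReal.ofReal (C * tail F (x - w)) := ENNReal.ofReal_le_ofReal this
              _ = ENNReal.ofReal C * F (Set.Ioi (x - w)) := by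
                  rw [ENNReal.ofReal_mul (by linarith), ofReal_tail]
          calc ∫⁻ w in Set.Iic (x - a), Hm (Set.Ioi (x - w)) ∂F
              ≤ ∫⁻ w in Set.Iic (x - a), ENNReal.ofReal C * F (Set.Ioi (x - w)) ∂F := step1
            _ ≤ ∫⁻ w, ENNReal.ofReal C * F (Set.Ioi (x - w)) ∂F := setLIntegral_le_lintegral _ _
            _ = ENNReal.ofReal C * ∫⁻ w, F (Set.Ioi (x - w)) ∂F :=
                lintegral_const_mul _ (meas_tailfun F x)
            _ = ENNReal.ofReal C * mconv F F (Set.Ioi x) := by rw [mconv_apply_Ioi]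
            _ ≤ ENNReal.ofReal C * ENNReal.ofReal (C₂ * tail F x) := by
                apply mul_le_mul_right
                rw [← ofReal_tail (μ := mconv F F)]
                exact ENNReal.ofReal_le_ofReal (hos x hxx0)
        have hP2 : ∫⁻ w in Set.Ioi (x - a), Hm (Set.Ioi (x - w)) ∂F
            ≤ ENNReal.ofReal (C₂ / tail F a * tail F x) := by
          calc ∫⁻ w in Set.Ioi (x - a), Hm (Set.Ioi (x - w)) ∂F
              ≤ ∫⁻ _ in Set.Ioi (x - a), 1 ∂F := by
                apply setLIntegral_mono' measurableSet_Ioi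
                intro w _
                exact prob_le_one
            _ = F (Set.Ioi (x - a)) := by rw [setLIntegral_const, one_mul]
            _ = ENNReal.ofReal (tail F (x - a)) := (ofReal_tail _).symm
            _ ≤ ENNReal.ofReal (C₂ / tail F a * tail F x) := by
                apply ENNReal.ofReal_le_ofReal
                exact shift_bd hlim hos (le_trans zero_le_one (le_max_right _ _)) le_rfl hxx0
        have etotal : iconv F (j + 2) (Set.Ioi x)
            ≤ ENNReal.ofReal C * ENNReal.ofReal (C₂ * tail F x)
              + ENNReal.ofReal (C₂ / tail F a * tail F x) := by
          rw [e1, esplit]; exact add_le_add hP1 hP2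
        have := ENNReal.toReal_mono (by finiteness) etotal
        rw [ENNReal.toReal_add (by finiteness) (by finiteness), ENNReal.toReal_mul,
          ENNReal.toReal_ofReal (by linarith), ENNReal.toReal_ofReal (mul_nonneg (by linarith) (tail_nonneg _)),
          ENNReal.toReal_ofReal
            (mul_nonneg (div_nonneg (by linarith) (tail_nonneg _)) (tail_nonneg _))] at this
        calc tail (iconv F (j + 2)) x ≤ C * (C₂ * tail F x) + C₂ / tail F a * tail F x := this
          _ = (C * C₂ + C₂ / tail F a) * tail F x := by ring

end Analytic

section Cut

variable {F : Measure ℝ} [IsProbabilityMeasure F] {γ : ℝ}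

lemma tl_Ioc {a b : ℝ} (hab : a ≤ b) :
    (F (Set.Ioc a b)).toReal = tail F a - tail F b := by
  have hsplit : F (Set.Ioi a) = F (Set.Ioc a b) + F (Set.Ioi b) := by
    rw [← Set.Ioc_union_Ioi_eq_Ioi hab]
    exact measure_union (Set.Ioc_disjoint_Ioi le_rfl) measurableSet_Ioi
  have := congrArg ENNReal.toReal hsplit
  rw [ENNReal.toReal_add (tl_ne_top _) (tl_ne_top _)] at this
  unfold tail
  linarith [this]

lemma cut_lemma (hγpos : 0 < γ)
    (hlim : ∀ t > (0 : ℝ),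
      Real.exp (γ * t) ≤ Filter.liminf (fun x => tail F (x - t) / tail F x) Filter.atTop)
    {C₂ x₀ : ℝ} (hC₂ : 1 ≤ C₂) (hos : ∀ x ≥ x₀, tail (mconv F F) x ≤ C₂ * tail F x)
    {ε : ℝ} (hε : 0 < ε) (L : ℝ) :
    ∃ L' ≥ L, ∃ X : ℝ, ∀ x ≥ X, ∃ M : ℝ, L ≤ M ∧ M ≤ L' ∧
      tail F M * tail F (x - M) ≤ ε * tail F x := by
  have hfp := f_pos hlim
  set Q : ℝ := (Real.exp γ + 1) / 2 with hQdef
  have hexpγ : 1 < Real.exp γ := by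
    rw [← Real.exp_zero]
    exact Real.exp_lt_exp.mpr hγpos
  have hQ1 : 1 < Q := by rw [hQdef]; linarith
  have hQ0 : 0 < Q := by linarith
  -- decrement bound
  obtain ⟨Z₁, hZ₁⟩ := hlim_ev (t := 1) (ε := Real.exp (γ * 1) - Q) hlim one_pos
    (by rw [mul_one]; linarith)
  have hdec : ∀ z : ℝ, Z₁ ≤ z + 1 → Q * tail F (z + 1) ≤ tail F z := by
    intro z hz
    have := hZ₁ (z + 1) hz
    have he : z + 1 - 1 = z := by ring
    rw [he] at this
    calc Q * tail F (z + 1) = (Real.exp (γ * 1) - (Real.exp (γ * 1) - Q)) * tail F (z + 1) := by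
          ring
      _ ≤ tail F z := this
  set c : ℝ := 1 - 1 / Q with hcdef
  have hc0 : 0 < c := by
    rw [hcdef]
    have : 1 / Q < 1 := by rw [div_lt_one hQ0]; linarith
    linarith
  set n₀ : ℕ := ⌈max (max L Z₁) 0⌉₊ with hn₀
  have hn₀ge : max (max L Z₁) 0 ≤ (n₀ : ℝ) := Nat.le_ceil _
  set N : ℕ := ⌈C₂ / (c * ε)⌉₊ + 1 with hN
  have hNge : C₂ / (c * ε) + 1 ≤ (N : ℝ) := by
    rw [hN]
    push_cast
    linarith [Nat.le_ceil (C₂ / (c * ε))]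
  refine ⟨(n₀ : ℝ) + N + 1, ?_, max x₀ 0, fun x hx => ?_⟩
  · have hL : L ≤ (n₀ : ℝ) := le_trans (le_trans (le_max_left _ _) (le_max_left _ _)) hn₀ge
    have : (0:ℝ) ≤ N := Nat.cast_nonneg N
    linarith
  · have hxx0 : x₀ ≤ x := le_trans (le_max_left _ _) hx
    set j : ℕ → ℝ := fun n => (n₀ : ℝ) + n with hj
    have hLn₀ : L ≤ (n₀ : ℝ) := le_trans (le_trans (le_max_left _ _) (le_max_left _ _)) hn₀ge
    have hZn₀ : Z₁ ≤ (n₀ : ℝ) := le_trans (le_trans (le_max_right _ _) (le_max_left _ _)) hn₀ge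
    by_contra hcon
    push_neg at hcon
    have hall : ∀ n : ℕ, n < N → ε * tail F x < tail F (j n) * tail F (x - j n) := by
      intro n hn
      apply hcon (j n)
      · simp only [hj]
        have : (0:ℝ) ≤ n := Nat.cast_nonneg n
        linarith
      · simp only [hj]
        have : (n : ℝ) ≤ N := by exact_mod_cast hn.le
        linarith
    -- rectangle bound in ENNReal
    have hrect : ∑ n ∈ Finset.range N, F (Set.Ioc (j n) (j n + 1)) * F (Set.Ioi (x - j n))
        ≤ mconv F F (Set.Ioi x) := by
      have hsets : ∀ n : ℕ, MeasurableSet (Set.Ioc (j n) (j n + 1) ×ˢ Set.Ioi (x - j n)) :=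
        fun n => measurableSet_Ioc.prod measurableSet_Ioi
      have hdisj : (↑(Finset.range N) : Set ℕ).PairwiseDisjoint
          (fun n => Set.Ioc (j n) (j n + 1) ×ˢ Set.Ioi (x - j n)) := by
        intro a _ b _ hab
        refine Set.disjoint_left.mpr ?_
        rintro ⟨p, q⟩ hp hq
        simp only [Set.mem_prod, Set.mem_Ioc, Set.mem_Ioi, hj] at hp hq
        rcases lt_or_gt_of_ne hab with h | h
        · have : (a : ℝ) + 1 ≤ b := by exact_mod_cast Nat.succ_le_of_lt h
          linarith [hp.1.2, hq.1.1]
        · have : (b : ℝ) + 1 ≤ a := by exact_mod_cast Nat.succ_le_of_lt h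
          linarith [hp.1.1, hq.1.2]
      have hunion : (⋃ n ∈ Finset.range N, Set.Ioc (j n) (j n + 1) ×ˢ Set.Ioi (x - j n))
          ⊆ (fun p : ℝ × ℝ => p.1 + p.2) ⁻¹' Set.Ioi x := by
        intro p hp
        simp only [Set.mem_iUnion] at hp
        obtain ⟨n, _, hpn⟩ := hp
        simp only [Set.mem_prod, Set.mem_Ioc, Set.mem_Ioi] at hpn
        simp only [Set.mem_preimage, Set.mem_Ioi]
        have h1 := hpn.1.1
        have h2 := hpn.2
        linarith
      calc ∑ n ∈ Finset.range N, F (Set.Ioc (j n) (j n + 1)) * F (Set.Ioi (x - j n))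
          = ∑ n ∈ Finset.range N,
              (F.prod F) (Set.Ioc (j n) (j n + 1) ×ˢ Set.Ioi (x - j n)) := by
            refine Finset.sum_congr rfl fun n _ => ?_
            rw [Measure.prod_prod]
        _ = (F.prod F) (⋃ n ∈ Finset.range N, Set.Ioc (j n) (j n + 1) ×ˢ Set.Ioi (x - j n)) :=
            (measure_biUnion_finset hdisj fun n _ => hsets n).symm
        _ ≤ (F.prod F) ((fun p : ℝ × ℝ => p.1 + p.2) ⁻¹' Set.Ioi x) := measure_mono hunion
        _ = mconv F F (Set.Ioi x) :=
            (Measure.map_apply measurable_addfun measurableSet_Ioi).symm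
    -- real form
    have hreal : ∑ n ∈ Finset.range N, (tail F (j n) - tail F (j n + 1)) * tail F (x - j n)
        ≤ C₂ * tail F x := by
      have h1 := ENNReal.toReal_mono (tl_ne_top _) hrect
      rw [ENNReal.toReal_sum (fun n _ => ENNReal.mul_ne_top (tl_ne_top _) (tl_ne_top _))] at h1
      have h2 : ∑ n ∈ Finset.range N, (F (Set.Ioc (j n) (j n + 1)) * F (Set.Ioi (x - j n))).toReal
          = ∑ n ∈ Finset.range N, (tail F (j n) - tail F (j n + 1)) * tail F (x - j n) := by
        refine Finset.sum_congr rfl fun n _ => ?_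
        rw [ENNReal.toReal_mul, tl_Ioc (by linarith)]
        rfl
      rw [h2] at h1
      exact le_trans h1 (hos x hxx0)
    -- lower bound for the sum
    have hsum1 : (N : ℝ) * (c * (ε * tail F x))
        ≤ ∑ n ∈ Finset.range N, (tail F (j n) - tail F (j n + 1)) * tail F (x - j n) := by
      have : (N : ℝ) * (c * (ε * tail F x)) = ∑ _n ∈ Finset.range N, c * (ε * tail F x) := by
        rw [Finset.sum_const, Finset.card_range, nsmul_eq_mul]
      rw [this]
      apply Finset.sum_le_sum
      intro n hn
      have hA := hall n (Finset.mem_range.mp hn)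
      have hdecn : Q * tail F (j n + 1) ≤ tail F (j n) := by
        apply hdec
        simp only [hj]
        have : (0:ℝ) ≤ n := Nat.cast_nonneg n
        linarith
      have hB : c * tail F (j n) ≤ tail F (j n) - tail F (j n + 1) := by
        rw [hcdef]
        have hQne : Q ≠ 0 := ne_of_gt hQ0
        have h5 : 1 / Q * (Q * tail F (j n + 1)) ≤ 1 / Q * tail F (j n) :=
          mul_le_mul_of_nonneg_left hdecn (by positivity)
        have h6 : 1 / Q * (Q * tail F (j n + 1)) = tail F (j n + 1) := by
          rw [← mul_assoc, one_div_mul_cancel hQne, one_mul]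
        rw [h6] at h5
        nlinarith [tail_nonneg (μ := F) (j n)]
      calc c * (ε * tail F x) ≤ c * (tail F (j n) * tail F (x - j n)) := by
            apply mul_le_mul_of_nonneg_left hA.le hc0.le
        _ = (c * tail F (j n)) * tail F (x - j n) := by ring
        _ ≤ (tail F (j n) - tail F (j n + 1)) * tail F (x - j n) :=
            mul_le_mul_of_nonneg_right hB (tail_nonneg _)
    -- contradiction
    have hfx := hfp x
    have hcε : 0 < c * ε := mul_pos hc0 hε
    have hdiv : C₂ / (c * ε) * (c * ε) = C₂ := div_mul_cancel₀ _ (ne_of_gt hcε)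
    have key1 : (C₂ / (c * ε) + 1) * (c * ε) ≤ (N : ℝ) * (c * ε) :=
      mul_le_mul_of_nonneg_right hNge hcε.le
    have key2 : (C₂ / (c * ε) + 1) * (c * ε) = C₂ + c * ε := by
      rw [add_mul, hdiv, one_mul]
    have key3 : (C₂ + c * ε) * tail F x ≤ (N : ℝ) * (c * ε) * tail F x := by
      apply mul_le_mul_of_nonneg_right _ (tail_nonneg _)
      rw [← key2]; exact key1
    have key4 : (N : ℝ) * (c * ε) * tail F x = (N : ℝ) * (c * (ε * tail F x)) := by ring
    have key5 : c * ε * tail F x > 0 := mul_pos hcε hfx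
    nlinarith [hsum1, hreal]

end Cut

section LemA

variable {F : Measure ℝ} [IsProbabilityMeasure F] {γ : ℝ}

lemma lemA (hs : F (Set.Iio 0) = 0) (hOS : MemOS F) (hγ : 0 ≤ γ)
    (hlim : ∀ t > (0 : ℝ),
      Real.exp (γ * t) ≤ Filter.liminf (fun x => tail F (x - t) / tail F x) Filter.atTop) :
    ∀ m : ℕ, ∀ t ε : ℝ, 0 < t → 0 < ε → ∃ Z : ℝ, ∀ x ≥ Z,
      (Real.exp (γ * t) - ε) * tail (iconv F (m + 1)) x ≤ tail (iconv F (m + 1)) (x - t) := by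
  have hfp := f_pos hlim
  rcases eq_or_lt_of_le hγ with hγ0 | hγpos
  · -- γ = 0 : trivial by monotonicity
    intro m t ε ht hε
    refine ⟨0, fun x _ => ?_⟩
    have he : Real.exp (γ * t) = 1 := by rw [← hγ0]; simp
    rw [he]
    have h1 : tail (iconv F (m + 1)) x ≤ tail (iconv F (m + 1)) (x - t) :=
      tail_antitone (by linarith)
    have h2 : 0 ≤ tail (iconv F (m + 1)) x := tail_nonneg _
    nlinarith
  · -- γ > 0
    obtain ⟨C₂, hC₂, x₀, hos⟩ := os_pack hOS hlim
    intro m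
    induction m with
    | zero =>
        intro t ε ht hε
        have e : iconv F (0 + 1) = F := iconv_one F
        rw [e]
        exact hlim_ev hlim ht hε
    | succ m ih =>
        intro t ε ht hε
        set H : Measure ℝ := iconv F (m + 1) with hH
        haveI : IsProbabilityMeasure H := iconv_prob F (m + 1)
        obtain ⟨C_H, hCH1, x_H, hCH⟩ := Ck_bound hs hOS hlim m
        have hexp1 : 1 ≤ Real.exp (γ * t) := by
          rw [← Real.exp_zero]
          exact Real.exp_le_exp.mpr (by positivity)
        set ε' : ℝ := min ε 1 with hε'def
        have hε'0 : 0 < ε' := lt_min hε one_pos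
        have hε'ε : ε' ≤ ε := min_le_left _ _
        have hε'1 : ε' ≤ 1 := min_le_right _ _
        set ε₁ : ℝ := ε' / 2 with hε₁def
        have hε₁0 : 0 < ε₁ := by positivity
        set K : ℝ := Real.exp (γ * t) * C_H * (C₂ / tail F t) + 1 with hKdef
        have hK1 : 1 ≤ K := by
          have : 0 ≤ Real.exp (γ * t) * C_H * (C₂ / tail F t) := by
            apply mul_nonneg
            apply mul_nonneg (Real.exp_nonneg _) (by linarith)
            exact div_nonneg (by linarith) (tail_nonneg _)
          rw [hKdef]
          exact le_add_of_nonneg_left this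
        have hK0 : 0 < K := by linarith
        set ε₂ : ℝ := ε' / (2 * K) with hε₂def
        have hε₂0 : 0 < ε₂ := by positivity
        obtain ⟨Z_H, hZ_H⟩ := ih t ε₁ ht hε₁0
        obtain ⟨Z_F, hZ_F⟩ := hlim_ev hlim ht hε₁0
        set L : ℝ := max (max Z_F x₀) (max x_H (t + 1)) with hLdef
        obtain ⟨L', hL'L, X_cut, hcut⟩ := cut_lemma hγpos hlim hC₂ hos hε₂0 L
        refine ⟨max (max X_cut (Z_H + L' + t)) (max (x_H + L') 0), fun x hx => ?_⟩
        obtain ⟨M, hML, hML', hMcut⟩ := hcut x (le_trans (le_max_left _ _) (le_max_left _ _) |>.trans hx)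
        have hMx₀ : x₀ ≤ M := le_trans (le_trans (le_max_right _ _) (le_max_left _ _)) hML
        have hMZF : Z_F ≤ M := le_trans (le_trans (le_max_left _ _) (le_max_left _ _)) hML
        have hMxH : x_H ≤ M := le_trans (le_trans (le_max_left _ _) (le_max_right _ _)) hML
        have hMt : t + 1 ≤ M := le_trans (le_trans (le_max_right _ _) (le_max_right _ _)) hML
        have hxZH : Z_H + L' + t ≤ x := le_trans (le_trans (le_max_right _ _) (le_max_left _ _)) hx
        have hxxH : x_H + L' ≤ x := le_trans (le_trans (le_max_left _ _) (le_max_right _ _)) hx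
        -- apply core
        set r : ℝ≥0∞ := ENNReal.ofReal (Real.exp (γ * t) - ε₁) with hr
        have hrnn : 0 ≤ Real.exp (γ * t) - ε₁ := by
          have : ε₁ ≤ 1 := by rw [hε₁def]; linarith
          linarith
        have hcore := core (H := H) (F := F) x t M ht r 0 ∅ MeasurableSet.empty
          (Set.empty_subset _)
          (fun y hy => by
            simp only [Set.mem_Iic] at hy
            have hxy : Z_F ≤ x - y := by linarith
            have := hZ_F (x - y) hxy
            have e2 : x - y - t = x - t - y := by ring
            rw [e2] at this
            exact ofReal_tail_le hrnn this)
          (fun w hw => by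
            simp only [Set.mem_Iic] at hw
            have hxw : Z_H ≤ x - w := by linarith
            have := hZ_H (x - w) hxw
            have e2 : x - w - t = x - t - w := by ring
            rw [e2] at this
            exact ofReal_tail_le hrnn this)
          (fun y hy => absurd hy (Set.notMem_empty y))
        rw [measure_empty, mul_zero, add_zero] at hcore
        -- convert to reals
        have hGeq : iconv F (m + 1 + 1) = mconv H F := rfl
        rw [← hGeq] at hcore
        have hreal := ENNReal.toReal_mono (by finiteness) hcore
        rw [ENNReal.toReal_mul, ENNReal.toReal_add (tl_ne_top _) (by finiteness),
          ENNReal.toReal_mul, ENNReal.toReal_mul, ENNReal.toReal_ofReal hrnn] at hreal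
        simp only [← tail_eq_toReal] at hreal
        -- hreal : (e-ε₁) * tail G x ≤ tail G (x-t) + (e-ε₁)*(tail H (x-M) * tail F (M-t))
        have hbd : (Real.exp (γ * t) - ε₁) * (tail H (x - M) * tail F (M - t))
            ≤ K * ε₂ * tail F x := by
          have hbH : tail H (x - M) ≤ C_H * tail F (x - M) := hCH _ (by linarith)
          have hbF : tail F (M - t) ≤ C₂ / tail F t * tail F M :=
            shift_bd hlim hos (by linarith) le_rfl hMx₀
          have hnn1 : (0:ℝ) ≤ tail H (x - M) := tail_nonneg _
          have hnn2 : (0:ℝ) ≤ tail F (M - t) := tail_nonneg _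
          have hnn3 : (0:ℝ) ≤ C_H * tail F (x - M) := mul_nonneg (by linarith) (tail_nonneg _)
          have hprod : tail H (x - M) * tail F (M - t)
              ≤ (C_H * tail F (x - M)) * (C₂ / tail F t * tail F M) := by
            apply mul_le_mul hbH hbF hnn2 hnn3
          have hprod2 : (C_H * tail F (x - M)) * (C₂ / tail F t * tail F M)
              = C_H * (C₂ / tail F t) * (tail F M * tail F (x - M)) := by ring
          have hprod3 : C_H * (C₂ / tail F t) * (tail F M * tail F (x - M))
              ≤ C_H * (C₂ / tail F t) * (ε₂ * tail F x) := by
            apply mul_le_mul_of_nonneg_left hMcut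
            apply mul_nonneg (by linarith) (div_nonneg (by linarith) (tail_nonneg _))
          have hle_exp : Real.exp (γ * t) - ε₁ ≤ Real.exp (γ * t) := by linarith
          calc (Real.exp (γ * t) - ε₁) * (tail H (x - M) * tail F (M - t))
              ≤ Real.exp (γ * t) * (tail H (x - M) * tail F (M - t)) := by
                apply mul_le_mul_of_nonneg_right hle_exp (mul_nonneg hnn1 hnn2)
            _ ≤ Real.exp (γ * t) * (C_H * (C₂ / tail F t) * (ε₂ * tail F x)) := by
                apply mul_le_mul_of_nonneg_left _ (Real.exp_nonneg _)
                rw [← hprod2] at hprod3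
                exact le_trans hprod hprod3
            _ = (Real.exp (γ * t) * C_H * (C₂ / tail F t)) * ε₂ * tail F x := by ring
            _ ≤ K * ε₂ * tail F x := by
                apply mul_le_mul_of_nonneg_right _ (tail_nonneg _)
                apply mul_le_mul_of_nonneg_right _ hε₂0.le
                rw [hKdef]; linarith
        have hfg : tail F x ≤ tail (iconv F (m + 1 + 1)) x := h_ge hs (m + 1) x
        have hgnn : 0 ≤ tail (iconv F (m + 1 + 1)) x := tail_nonneg _
        have heps : ε₁ + K * ε₂ = ε' := by
          rw [hε₁def, hε₂def]
          field_simp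
          ring
        have hKε₂nn : 0 ≤ K * ε₂ := by positivity
        have s1 : K * ε₂ * tail F x ≤ K * ε₂ * tail (iconv F (m + 1 + 1)) x :=
          mul_le_mul_of_nonneg_left hfg hKε₂nn
        have s2 : (Real.exp (γ * t) - ε₁) * tail (iconv F (m + 1 + 1)) x
            ≤ tail (iconv F (m + 1 + 1)) (x - t) + K * ε₂ * tail (iconv F (m + 1 + 1)) x := by
          linarith [hreal, hbd, s1]
        have s3 : (Real.exp (γ * t) - ε) * tail (iconv F (m + 1 + 1)) x
            ≤ (Real.exp (γ * t) - ε₁ - K * ε₂) * tail (iconv F (m + 1 + 1)) x := by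
          apply mul_le_mul_of_nonneg_right _ hgnn
          linarith
        have s4 : (Real.exp (γ * t) - ε₁ - K * ε₂) * tail (iconv F (m + 1 + 1)) x
            = (Real.exp (γ * t) - ε₁) * tail (iconv F (m + 1 + 1)) x
              - K * ε₂ * tail (iconv F (m + 1 + 1)) x := by ring
        linarith [s2, s3, s4]

end LemA

section Freq

variable {F : Measure ℝ} [IsProbabilityMeasure F] {γ : ℝ}

lemma tendsto_neg_shift (hfp : ∀ x : ℝ, 0 < tail F x) {s : ℝ}
    (hTs : Tendsto (fun x => tail F (x - s) / tail F x) atTop (nhds (Real.exp (γ * s)))) :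
    Tendsto (fun x => tail F (x + s) / tail F x) atTop (nhds (Real.exp (γ * s))⁻¹) := by
  have h1 : Tendsto (fun x => tail F (x + s - s) / tail F (x + s)) atTop
      (nhds (Real.exp (γ * s))) :=
    hTs.comp (tendsto_atTop_add_const_right atTop s tendsto_id)
  have h2 := h1.inv₀ (ne_of_gt (Real.exp_pos _))
  refine h2.congr fun x => ?_
  rw [add_sub_cancel_right, inv_div]

lemma exists_freq
    (hlim : ∀ t > (0 : ℝ),
      Real.exp (γ * t) ≤ Filter.liminf (fun x => tail F (x - t) / tail F x) Filter.atTop)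
    (hnotL : ¬ MemL γ F) :
    ∃ T0 : ℝ, 0 < T0 ∧ ∃ ε0 : ℝ, 0 < ε0 ∧
      ∃ᶠ x in atTop, (Real.exp (γ * T0) + ε0) * tail F x ≤ tail F (x - T0) := by
  have hfp := f_pos hlim
  rw [MemL] at hnotL
  push_neg at hnotL
  obtain ⟨t, hnt⟩ := hnotL
  have hpos : ∃ T0 : ℝ, 0 < T0 ∧ ¬ Tendsto (fun x => tail F (x - T0) / tail F x) atTop
      (nhds (Real.exp (γ * T0))) := by
    rcases lt_trichotomy t 0 with h | h | h
    · refine ⟨-t, by linarith, fun hTs => hnt ?_⟩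
      have h3 := tendsto_neg_shift hfp hTs
      have hval : (Real.exp (γ * -t))⁻¹ = Real.exp (γ * t) := by
        rw [← Real.exp_neg]
        congr 1
        ring
      rw [hval] at h3
      refine h3.congr fun x => ?_
      rw [sub_eq_add_neg]
    · exfalso
      apply hnt
      subst h
      simp only [sub_zero, mul_zero, Real.exp_zero]
      exact tendsto_const_nhds.congr fun x => (div_self (ne_of_gt (hfp x))).symm
    · exact ⟨t, h, hnt⟩
  obtain ⟨T0, hT0, hNT⟩ := hpos
  refine ⟨T0, hT0, ?_⟩
  rw [Metric.tendsto_atTop] at hNT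
  push_neg at hNT
  obtain ⟨ε, hε, hfreq⟩ := hNT
  refine ⟨ε, hε, ?_⟩
  have hlower : ∀ᶠ x in atTop,
      Real.exp (γ * T0) - ε < tail F (x - T0) / tail F x := by
    apply Filter.eventually_lt_of_lt_liminf
    · exact lt_of_lt_of_le (by linarith) (hlim T0 hT0)
    · exact Filter.isBoundedUnder_of ⟨0, fun x => div_nonneg (tail_nonneg _) (tail_nonneg _)⟩
  have hfreq' : ∃ᶠ x in atTop, ε ≤ dist (tail F (x - T0) / tail F x) (Real.exp (γ * T0)) := by
    rw [Filter.frequently_atTop]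
    intro a
    obtain ⟨b, hb, hb2⟩ := hfreq a
    exact ⟨b, hb, hb2⟩
  have hcomb := hfreq'.and_eventually hlower
  apply hcomb.mono
  rintro x ⟨h1, h2⟩
  rw [Real.dist_eq] at h1
  have h3 : Real.exp (γ * T0) + ε ≤ tail F (x - T0) / tail F x := by
    rcases le_abs.mp h1 with h4 | h4
    · linarith
    · linarith
  calc (Real.exp (γ * T0) + ε) * tail F x
      ≤ tail F (x - T0) / tail F x * tail F x :=
        mul_le_mul_of_nonneg_right h3 (tail_nonneg _)
    _ = tail F (x - T0) := div_mul_cancel₀ _ (ne_of_gt (hfp x))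

end Freq

section MainHelpers

lemma ofReal_pair_le {ρ σ τ : Measure ℝ} [IsProbabilityMeasure ρ] [IsProbabilityMeasure σ]
    [IsProbabilityMeasure τ] {a b : ℝ} (ha : 0 ≤ a) (hb : 0 ≤ b) {z1 z2 z3 : ℝ}
    (h : a * tail ρ z1 + b * tail σ z2 ≤ tail τ z3) :
    ENNReal.ofReal a * ρ (Set.Ioi z1) + ENNReal.ofReal b * σ (Set.Ioi z2) ≤ τ (Set.Ioi z3) := by
  rw [← ofReal_tail (μ := ρ), ← ofReal_tail (μ := σ), ← ofReal_tail (μ := τ),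
    ← ENNReal.ofReal_mul ha, ← ENNReal.ofReal_mul hb,
    ← ENNReal.ofReal_add (mul_nonneg ha (tail_nonneg _)) (mul_nonneg hb (tail_nonneg _))]
  exact ENNReal.ofReal_le_ofReal h

end MainHelpers

set_option maxHeartbeats 1000000 in
theorem stmt11 (F : Measure ℝ) [IsProbabilityMeasure F] (hs : F (Set.Iio 0) = 0)
    (γ : ℝ) (hγ : 0 ≤ γ) (hOS : MemOS F) (hnotL : ¬ MemL γ F)
    (hlim : ∀ t > (0 : ℝ),
      Real.exp (γ * t) ≤ Filter.liminf (fun x => tail F (x - t) / tail F x) Filter.atTop) :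
    ∀ k : ℕ, 2 ≤ k → ¬ MemL γ (iconv F k) := by
  intro k hk hL
  obtain ⟨m, rfl⟩ : ∃ m, k = m + 2 := ⟨k - 2, by omega⟩
  have hfp := f_pos hlim
  obtain ⟨C₂, hC₂, x₀, hos⟩ := os_pack hOS hlim
  obtain ⟨C_G, hCG1, x_G, hCG⟩ := Ck_bound hs hOS hlim (m + 1)
  obtain ⟨C_H, hCH1, x_H, hCH⟩ := Ck_bound hs hOS hlim m
  set H : Measure ℝ := iconv F (m + 1) with hH
  haveI : IsProbabilityMeasure H := iconv_prob F (m + 1)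
  have hgpos : ∀ x : ℝ, 0 < tail (iconv F (m + 2)) x := h_pos hs hlim (m + 1)
  obtain ⟨T0, hT0, ε0, hε0, hfreq⟩ := exists_freq hlim hnotL
  set e0 : ℝ := Real.exp (γ * T0) with he0def
  have he0pos : 0 < e0 := Real.exp_pos _
  set δ0 : ℝ := ε0 / (2 * e0) with hδ0
  have hδ0pos : 0 < δ0 := by positivity
  obtain ⟨η, hη, hηexp⟩ : ∃ η : ℝ, 0 < η ∧ Real.exp (γ * η) ≤ 1 + δ0 := by
    have hcont : Tendsto (fun sv : ℝ => Real.exp (γ * sv)) (nhds 0) (nhds 1) := by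
      have hc : Continuous (fun sv : ℝ => Real.exp (γ * sv)) :=
        Real.continuous_exp.comp (continuous_const.mul continuous_id)
      have h0 := hc.tendsto 0
      simpa using h0
    have hev : ∀ᶠ sv : ℝ in nhds 0, Real.exp (γ * sv) < 1 + δ0 :=
      hcont.eventually_lt_const (by linarith)
    rw [Metric.eventually_nhds_iff] at hev
    obtain ⟨δ, hδ, hδev⟩ := hev
    refine ⟨δ / 2, by linarith, (hδev ?_).le⟩
    rw [Real.dist_eq, sub_zero, abs_of_pos (by linarith)]
    linarith
  set T : ℝ := T0 + η with hTdef
  have hTpos : 0 < T := by linarith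
  set e : ℝ := Real.exp (γ * T) with hedef
  have he1 : 1 ≤ e := by
    rw [hedef, ← Real.exp_zero]
    exact Real.exp_le_exp.mpr (by positivity)
  have heupper : e ≤ e0 + ε0 / 2 := by
    have h1 : e = e0 * Real.exp (γ * η) := by
      rw [hedef, he0def, ← Real.exp_add]
      congr 1
      ring
    have h2 : e0 * Real.exp (γ * η) ≤ e0 * (1 + δ0) :=
      mul_le_mul_of_nonneg_left hηexp he0pos.le
    have h3 : e0 * (1 + δ0) = e0 + ε0 / 2 := by
      rw [hδ0]
      field_simp
    linarith
  -- bump set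
  obtain ⟨s0, hs00, hmB⟩ : ∃ s0 : ℝ, 0 ≤ s0 ∧ H (Set.Icc s0 (s0 + η)) ≠ 0 := by
    by_contra hcon
    push_neg at hcon
    have hall : ∀ n : ℕ, H (Set.Icc ((n : ℝ) * η) ((n : ℝ) * η + η)) = 0 :=
      fun n => hcon ((n : ℝ) * η) (by positivity)
    have hzero : H (⋃ n : ℕ, Set.Icc ((n : ℝ) * η) ((n : ℝ) * η + η)) = 0 :=
      measure_iUnion_null hall
    have hsub : Set.Ici (0 : ℝ) ⊆ ⋃ n : ℕ, Set.Icc ((n : ℝ) * η) ((n : ℝ) * η + η) := by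
      intro z hz
      simp only [Set.mem_Ici] at hz
      refine Set.mem_iUnion.mpr ⟨⌊z / η⌋₊, ?_⟩
      constructor
      · calc (⌊z / η⌋₊ : ℝ) * η ≤ z / η * η :=
            mul_le_mul_of_nonneg_right (Nat.floor_le (by positivity)) hη.le
          _ = z := div_mul_cancel₀ _ (ne_of_gt hη)
      · have h5 : z / η < (⌊z / η⌋₊ : ℝ) + 1 := Nat.lt_floor_add_one _
        have h6 : z / η * η ≤ ((⌊z / η⌋₊ : ℝ) + 1) * η :=
          mul_le_mul_of_nonneg_right h5.le hη.le
        rw [div_mul_cancel₀ _ (ne_of_gt hη)] at h6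
        nlinarith
    have hIci : H (Set.Ici (0 : ℝ)) = 1 := by
      rw [hH, ← Set.compl_Iio, prob_compl_eq_one_sub measurableSet_Iio,
        iconv_Iio F hs (m + 1), tsub_zero]
    have hmono := measure_mono (μ := H) hsub
    rw [hzero, hIci] at hmono
    simp at hmono
  set B : Set ℝ := Set.Icc s0 (s0 + η) with hBdef
  set mB : ℝ := (H B).toReal with hmBdef
  have hmBpos : 0 < mB := ENNReal.toReal_pos hmB (tl_ne_top _)
  have hmBle : mB ≤ 1 := by
    rw [hmBdef, ← ENNReal.toReal_one]
    exact ENNReal.toReal_mono ENNReal.one_ne_top prob_le_one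
  -- epsilon
  set εm : ℝ := min (ε0 * mB / (16 * C_G)) (1 / 2) with hεmdef
  have hεm0 : 0 < εm := lt_min (by positivity) (by norm_num)
  have hεm12 : εm ≤ 1 / 2 := min_le_right _ _
  have hεmCG : εm ≤ ε0 * mB / (16 * C_G) := min_le_left _ _
  have hrnn : 0 ≤ e - εm := by linarith
  -- L(γ) hypothesis in eventual form
  have hLev : ∀ᶠ x in atTop,
      tail (iconv F (m + 2)) (x - T) ≤ (e + εm) * tail (iconv F (m + 2)) x := by
    have h2 : ∀ᶠ x in atTop,
        dist (tail (iconv F (m + 2)) (x - T) / tail (iconv F (m + 2)) x) e < εm :=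
      Metric.tendsto_nhds.mp (hL T) εm hεm0
    apply h2.mono
    intro x hx
    rw [Real.dist_eq] at hx
    have h3 := (abs_lt.mp hx).2
    have h4 : tail (iconv F (m + 2)) (x - T) / tail (iconv F (m + 2)) x < e + εm := by linarith
    exact le_of_lt ((div_lt_iff₀ (hgpos x)).mp h4)
  -- generic bump inequality
  have hbump_generic : ∀ w x : ℝ, x = w + (s0 + η) →
      (e0 + ε0) * tail F w ≤ tail F (w - T0) →
      ∀ y ∈ B, (e - εm) * tail F (x - y) + ε0 / 2 * tail F x ≤ tail F (x - T - y) := by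
    intro w x hx hw y hy
    simp only [hBdef, Set.mem_Icc] at hy
    have hf1 : tail F (x - y) ≤ tail F w := by
      apply tail_antitone
      rw [hx]
      linarith [hy.2]
    have hf2 : tail F x ≤ tail F w := by
      apply tail_antitone
      rw [hx]
      linarith
    have hf3 : tail F (w - T0) ≤ tail F (x - T - y) := by
      apply tail_antitone
      rw [hx, hTdef]
      linarith [hy.1]
    have hfwnn : 0 ≤ tail F w := tail_nonneg _
    have hc1 : (e - εm) * tail F (x - y) ≤ (e - εm) * tail F w :=
      mul_le_mul_of_nonneg_left hf1 hrnn
    have hc2 : ε0 / 2 * tail F x ≤ ε0 / 2 * tail F w :=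
      mul_le_mul_of_nonneg_left hf2 (by linarith)
    have hc3 : ((e - εm) + ε0 / 2) * tail F w ≤ (e0 + ε0) * tail F w :=
      mul_le_mul_of_nonneg_right (by linarith) hfwnn
    have hc4 : ((e - εm) + ε0 / 2) * tail F w
        = (e - εm) * tail F w + ε0 / 2 * tail F w := by ring
    linarith
  rcases eq_or_lt_of_le hγ with hγ0 | hγpos
  · -- γ = 0
    have he_eq : e = 1 := by rw [hedef, ← hγ0, zero_mul, Real.exp_zero]
    have hEall : ∀ᶠ x in atTop,
        (tail (iconv F (m + 2)) (x - T) ≤ (e + εm) * tail (iconv F (m + 2)) x ∧ x_G ≤ x) :=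
      hLev.and (eventually_ge_atTop x_G)
    have hEw : ∀ᶠ w in atTop,
        (tail (iconv F (m + 2)) (w + (s0 + η) - T)
            ≤ (e + εm) * tail (iconv F (m + 2)) (w + (s0 + η)) ∧ x_G ≤ w + (s0 + η)) :=
      (tendsto_atTop_add_const_right atTop (s0 + η) tendsto_id).eventually hEall
    obtain ⟨w, hw1, hw2, hw3⟩ := (hfreq.and_eventually hEw).exists
    set x : ℝ := w + (s0 + η) with hxdef
    have hcore := core0 (H := H) (F := F) x T (ENNReal.ofReal (e - εm))
      (ENNReal.ofReal (ε0 / 2)) B measurableSet_Icc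
      (fun y => by
        apply ofReal_tail_le hrnn
        have hmon : tail F (x - y) ≤ tail F (x - T - y) := tail_antitone (by linarith)
        have : (e - εm) * tail F (x - y) ≤ 1 * tail F (x - y) :=
          mul_le_mul_of_nonneg_right (by linarith [he_eq]) (tail_nonneg _)
        linarith)
      (fun y hy => ofReal_pair_le hrnn (by linarith)
        (hbump_generic w x hxdef hw1 y hy))
    have hGeq : iconv F (m + 2) = mconv H F := rfl
    rw [← hGeq] at hcore
    have hreal := ENNReal.toReal_mono (tl_ne_top _) hcore
    rw [ENNReal.toReal_add (by finiteness) (by finiteness), ENNReal.toReal_mul,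
      ENNReal.toReal_mul, ENNReal.toReal_mul, ENNReal.toReal_ofReal hrnn,
      ENNReal.toReal_ofReal (by linarith)] at hreal
    simp only [← tail_eq_toReal] at hreal
    rw [← hmBdef] at hreal
    -- hreal : (e - εm) * tail G x + ε0/2 * tail F x * mB ≤ tail G (x - T)
    have hup : tail (iconv F (m + 2)) (x - T) ≤ (e + εm) * tail (iconv F (m + 2)) x := hw2
    have hCGx : tail (iconv F (m + 2)) x ≤ C_G * tail F x := hCG x hw3
    have hfx := hfp x
    have hεmbd : εm * C_G ≤ ε0 * mB / 16 := by
      have h7 : εm * (16 * C_G) ≤ ε0 * mB / (16 * C_G) * (16 * C_G) :=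
        mul_le_mul_of_nonneg_right hεmCG (by linarith)
      rw [div_mul_cancel₀ _ (by positivity : (16 : ℝ) * C_G ≠ 0)] at h7
      linarith
    have step1 : ε0 / 2 * tail F x * mB ≤ 2 * εm * tail (iconv F (m + 2)) x := by
      clear_value εm mB e x
      linarith only [hreal, hup]
    have step2 : 2 * εm * tail (iconv F (m + 2)) x ≤ 2 * εm * (C_G * tail F x) :=
      mul_le_mul_of_nonneg_left hCGx (by linarith)
    have step4 : 2 * (εm * C_G) * tail F x ≤ 2 * (ε0 * mB / 16) * tail F x :=
      mul_le_mul_of_nonneg_right (by linarith) (tail_nonneg _)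
    have hchain : ε0 * mB / 2 * tail F x ≤ ε0 * mB / 8 * tail F x := by
      calc ε0 * mB / 2 * tail F x = ε0 / 2 * tail F x * mB := by ring
        _ ≤ 2 * εm * tail (iconv F (m + 2)) x := step1
        _ ≤ 2 * εm * (C_G * tail F x) := step2
        _ = 2 * (εm * C_G) * tail F x := by ring
        _ ≤ 2 * (ε0 * mB / 16) * tail F x := step4
        _ = ε0 * mB / 8 * tail F x := by ring
    have hpos2 : 0 < ε0 * mB * tail F x := mul_pos (mul_pos hε0 hmBpos) hfx
    linarith only [hchain, hpos2]
  · -- γ > 0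
    set K : ℝ := e * C_H * (C₂ / tail F T) + 1 with hKdef
    have hKge : 0 ≤ e * C_H * (C₂ / tail F T) := by
      apply mul_nonneg (mul_nonneg (by linarith) (by linarith))
      exact div_nonneg (by linarith) (tail_nonneg _)
    have hK1 : 1 ≤ K := by rw [hKdef]; exact le_add_of_nonneg_left hKge
    have hK0 : 0 < K := by linarith
    set ε₂ : ℝ := ε0 * mB / (16 * K) with hε₂def
    have hε₂0 : 0 < ε₂ := by positivity
    obtain ⟨Z_H, hZ_H⟩ := lemA hs hOS hγ hlim m T εm hTpos hεm0
    obtain ⟨Z_F, hZ_F⟩ := hlim_ev hlim hTpos hεm0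
    set L : ℝ := max (max Z_F x₀) (max x_H (T + 1)) with hLdef
    obtain ⟨L', hL'L, X_cut, hcut⟩ := cut_lemma hγpos hlim hC₂ hos hε₂0 L
    have hEall : ∀ᶠ x in atTop,
        (tail (iconv F (m + 2)) (x - T) ≤ (e + εm) * tail (iconv F (m + 2)) x
          ∧ x_G ≤ x ∧ X_cut ≤ x ∧ Z_H + L' + T ≤ x ∧ x_H + L' ≤ x ∧ L' + (s0 + η) ≤ x) :=
      hLev.and ((eventually_ge_atTop x_G).and ((eventually_ge_atTop X_cut).and
        ((eventually_ge_atTop (Z_H + L' + T)).and ((eventually_ge_atTop (x_H + L')).and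
          (eventually_ge_atTop (L' + (s0 + η)))))))
    have hEw := (tendsto_atTop_add_const_right atTop (s0 + η) tendsto_id).eventually hEall
    obtain ⟨w, hw1, hw2, hw3, hw4, hw5, hw6, hw7⟩ := (hfreq.and_eventually hEw).exists
    simp only [id_eq] at hw2 hw3 hw4 hw5 hw6 hw7
    set x : ℝ := w + (s0 + η) with hxdef
    obtain ⟨M, hML, hML', hMcut⟩ := hcut x hw4
    have hMx₀ : x₀ ≤ M := le_trans (le_trans (le_max_right _ _) (le_max_left _ _)) hML
    have hMZF : Z_F ≤ M := le_trans (le_trans (le_max_left _ _) (le_max_left _ _)) hML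
    have hMxH : x_H ≤ M := le_trans (le_trans (le_max_left _ _) (le_max_right _ _)) hML
    have hMT : T + 1 ≤ M := le_trans (le_trans (le_max_right _ _) (le_max_right _ _)) hML
    have hcore := core (H := H) (F := F) x T M hTpos (ENNReal.ofReal (e - εm))
      (ENNReal.ofReal (ε0 / 2)) B measurableSet_Icc
      (by
        intro y hy
        simp only [hBdef, Set.mem_Icc] at hy
        simp only [Set.mem_Iic]
        linarith [hy.2])
      (fun y hy => by
        simp only [Set.mem_Iic] at hy
        have hxy : Z_F ≤ x - y := by linarith
        have h9 := hZ_F (x - y) hxy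
        have e2 : x - y - T = x - T - y := by ring
        rw [e2] at h9
        exact ofReal_tail_le hrnn h9)
      (fun wv hwv => by
        simp only [Set.mem_Iic] at hwv
        have hxw : Z_H ≤ x - wv := by linarith
        have h9 := hZ_H (x - wv) hxw
        have e2 : x - wv - T = x - T - wv := by ring
        rw [e2] at h9
        exact ofReal_tail_le hrnn h9)
      (fun y hy => ofReal_pair_le hrnn (by linarith)
        (hbump_generic w x hxdef hw1 y hy))
    have hGeq : iconv F (m + 2) = mconv H F := rfl
    rw [← hGeq] at hcore
    have hreal := ENNReal.toReal_mono (by finiteness) hcore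
    rw [ENNReal.toReal_add (by finiteness) (by finiteness),
      ENNReal.toReal_add (tl_ne_top _) (by finiteness), ENNReal.toReal_mul,
      ENNReal.toReal_mul, ENNReal.toReal_mul, ENNReal.toReal_mul, ENNReal.toReal_mul,
      ENNReal.toReal_ofReal hrnn, ENNReal.toReal_ofReal (by linarith)] at hreal
    simp only [← tail_eq_toReal] at hreal
    rw [← hmBdef] at hreal
    -- boundary bound
    have hbd : (e - εm) * (tail H (x - M) * tail F (M - T)) ≤ K * ε₂ * tail F x := by
      have hbH : tail H (x - M) ≤ C_H * tail F (x - M) := hCH _ (by linarith)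
      have hbF : tail F (M - T) ≤ C₂ / tail F T * tail F M :=
        shift_bd hlim hos (by linarith) le_rfl hMx₀
      have hnn1 : (0:ℝ) ≤ tail H (x - M) := tail_nonneg _
      have hnn2 : (0:ℝ) ≤ tail F (M - T) := tail_nonneg _
      have hnn3 : (0:ℝ) ≤ C_H * tail F (x - M) := mul_nonneg (by linarith) (tail_nonneg _)
      have hprod : tail H (x - M) * tail F (M - T)
          ≤ (C_H * tail F (x - M)) * (C₂ / tail F T * tail F M) :=
        mul_le_mul hbH hbF hnn2 hnn3
      have hprod2 : (C_H * tail F (x - M)) * (C₂ / tail F T * tail F M)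
          = C_H * (C₂ / tail F T) * (tail F M * tail F (x - M)) := by ring
      have hprod3 : C_H * (C₂ / tail F T) * (tail F M * tail F (x - M))
          ≤ C_H * (C₂ / tail F T) * (ε₂ * tail F x) := by
        apply mul_le_mul_of_nonneg_left hMcut
        apply mul_nonneg (by linarith) (div_nonneg (by linarith) (tail_nonneg _))
      calc (e - εm) * (tail H (x - M) * tail F (M - T))
          ≤ e * (tail H (x - M) * tail F (M - T)) :=
            mul_le_mul_of_nonneg_right (by linarith) (mul_nonneg hnn1 hnn2)
        _ ≤ e * (C_H * (C₂ / tail F T) * (ε₂ * tail F x)) := by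
            apply mul_le_mul_of_nonneg_left _ (by linarith)
            rw [← hprod2] at hprod3
            exact le_trans hprod hprod3
        _ = (e * C_H * (C₂ / tail F T)) * ε₂ * tail F x := by ring
        _ ≤ K * ε₂ * tail F x := by
            apply mul_le_mul_of_nonneg_right _ (tail_nonneg _)
            apply mul_le_mul_of_nonneg_right _ hε₂0.le
            rw [hKdef]; linarith
    have hup : tail (iconv F (m + 2)) (x - T) ≤ (e + εm) * tail (iconv F (m + 2)) x := hw2
    have hCGx : tail (iconv F (m + 2)) x ≤ C_G * tail F x := hCG x hw3
    have hfx := hfp x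
    have hKε₂ : K * ε₂ = ε0 * mB / 16 := by
      rw [hε₂def]
      field_simp
    have hεmbd : εm * C_G ≤ ε0 * mB / 16 := by
      have h7 : εm * (16 * C_G) ≤ ε0 * mB / (16 * C_G) * (16 * C_G) :=
        mul_le_mul_of_nonneg_right hεmCG (by linarith)
      rw [div_mul_cancel₀ _ (by positivity : (16 : ℝ) * C_G ≠ 0)] at h7
      linarith
    have step1 : ε0 / 2 * tail F x * mB
        ≤ 2 * εm * tail (iconv F (m + 2)) x + K * ε₂ * tail F x := by
      clear_value K ε₂ εm mB e x
      linarith only [hreal, hup, hbd]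
    have step2 : 2 * εm * tail (iconv F (m + 2)) x ≤ 2 * εm * (C_G * tail F x) :=
      mul_le_mul_of_nonneg_left hCGx (by linarith)
    have step4 : 2 * (εm * C_G) * tail F x ≤ 2 * (ε0 * mB / 16) * tail F x :=
      mul_le_mul_of_nonneg_right (by linarith) (tail_nonneg _)
    have hchain : ε0 * mB / 2 * tail F x ≤ ε0 * mB * (3 / 16) * tail F x := by
      calc ε0 * mB / 2 * tail F x = ε0 / 2 * tail F x * mB := by ring
        _ ≤ 2 * εm * tail (iconv F (m + 2)) x + K * ε₂ * tail F x := step1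
        _ ≤ 2 * εm * (C_G * tail F x) + K * ε₂ * tail F x := by linarith only [step2]
        _ = 2 * (εm * C_G) * tail F x + K * ε₂ * tail F x := by ring
        _ ≤ 2 * (ε0 * mB / 16) * tail F x + K * ε₂ * tail F x := by linarith only [step4]
        _ = 2 * (ε0 * mB / 16) * tail F x + ε0 * mB / 16 * tail F x := by rw [hKε₂]
        _ = ε0 * mB * (3 / 16) * tail F x := by ring
    have hpos2 : 0 < ε0 * mB * tail F x := mul_pos (mul_pos hε0 hmBpos) hfx
    linarith only [hchain, hpos2]
end

section
/- Let F₁ be a long-tailed distribution on [0,∞), let a > 1, and define a distribution F₀ by F̄₀(x) = F̄₁(x) for x < x₁ and, for each i ≥ 1, F̄₀(x) = F̄₁(xᵢ) for xᵢ ≤ x < yᵢ and F̄₀(x) = F̄₁(x) for yᵢ ≤ x < x_{i+1}, where xᵢ < yᵢ < x_{i+1}, F̄₁(xᵢ) = a F̄₁(yᵢ), yᵢ - xᵢ → ∞, and x_{i+1} - yᵢ → ∞. Then F̄₁(x) ≤ F̄₀(x) ≤ a F̄₁(x) for all x, and F₀ is not long-tailed, since limsup_{x→∞} F̄₀(x-1)/F̄₀(x)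 ≥ a > 1. -/
open MeasureTheory Filter Set Asymptotics

lemma tail_nonneg' (mu : Measure ℝ) (z : ℝ) : 0 ≤ tail mu z := ENNReal.toReal_nonneg

lemma tail_anti' (mu : Measure ℝ) [IsFiniteMeasure mu] : Antitone (tail mu) := by
  intro u v huv
  exact ENNReal.toReal_mono (measure_ne_top mu _) (measure_mono (Set.Ioi_subset_Ioi huv))

theorem stmt18 (F1 F0 : Measure ℝ) [IsProbabilityMeasure F1] [IsProbabilityMeasure F0]
    (hs1 : F1 (Set.Iio 0) = 0)
    (hL1 : ∀ t > (0 : ℝ),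
      Filter.Tendsto (fun x => tail F1 (x - t) / tail F1 x) Filter.atTop (nhds 1))
    (a : ℝ) (ha : 1 < a) (x y : ℕ → ℝ)
    (hxy : ∀ i : ℕ, 1 ≤ i → x i < y i ∧ y i < x (i + 1))
    (hratio : ∀ i : ℕ, 1 ≤ i → tail F1 (x i) = a * tail F1 (y i))
    (hgap1 : Filter.Tendsto (fun i => y i - x i) Filter.atTop Filter.atTop)
    (hgap2 : Filter.Tendsto (fun i => x (i + 1) - y i) Filter.atTop Filter.atTop)
    (ht0 : ∀ z : ℝ, z < x 1 → tail F0 z = tail F1 z)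
    (ht1 : ∀ i : ℕ, 1 ≤ i → ∀ z : ℝ, x i ≤ z → z < y i → tail F0 z = tail F1 (x i))
    (ht2 : ∀ i : ℕ, 1 ≤ i → ∀ z : ℝ, y i ≤ z → z < x (i + 1) → tail F0 z = tail F1 z) :
    (∀ z : ℝ, tail F1 z ≤ tail F0 z ∧ tail F0 z ≤ a * tail F1 z) ∧
    (¬ ∀ t > (0 : ℝ),
      Filter.Tendsto (fun z => tail F0 (z - t) / tail F0 z) Filter.atTop (nhds 1)) ∧
    a ≤ Filter.limsup (fun z => tail F0 (z - 1) / tail F0 z) Filter.atTop := by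

  classical
  have hpos : ∀ z, 0 < tail F1 z := by
    intro z
    by_contra h
    have h0 : tail F1 z = 0 := le_antisymm (not_lt.mp h) (tail_nonneg' _ _)
    have he : (fun u => tail F1 (u - 1) / tail F1 u) =ᶠ[atTop] (fun _ => (0:ℝ)) := by
      filter_upwards [eventually_ge_atTop (z + 1)] with u hu
      have h1 : tail F1 (u - 1) = 0 :=
        le_antisymm (h0 ▸ tail_anti' F1 (by linarith)) (tail_nonneg' _ _)
      simp [h1]
    have := tendsto_nhds_unique ((hL1 1 one_pos).congr' he) tendsto_const_nhds
    norm_num at this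
  have hmono : ∀ i : ℕ, 1 ≤ i → x i < x (i+1) :=
    fun i hi => (hxy i hi).1.trans (hxy i hi).2
  have hxm : ∀ n : ℕ, x 1 ≤ x (n+1) := by
    intro n
    induction n with
    | zero => exact le_rfl
    | succ n ih => exact ih.trans (hmono (n+1) (Nat.le_add_left 1 n)).le
  have hsum : Tendsto (fun i => x (i+1) - x i) atTop atTop :=
    (Filter.Tendsto.atTop_add_atTop hgap2 hgap1).congr (fun i => by ring)
  have hub : ∀ z : ℝ, ∃ i : ℕ, 1 ≤ i ∧ z < x i := by
    intro z
    obtain ⟨N, hN⟩ := eventually_atTop.mp (hsum.eventually_ge_atTop 1)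
    set M := max N 1 with hM
    have hstep : ∀ i, M ≤ i → x i + 1 ≤ x (i+1) := by
      intro i hi
      have := hN i (le_trans (le_max_left _ _) hi)
      linarith
    have hk : ∀ k : ℕ, x M + k ≤ x (M + k) := by
      intro k
      induction k with
      | zero => simp
      | succ n ih =>
        have h2 := hstep (M + n) (Nat.le_add_right _ _)
        push_cast at ih ⊢
        have : M + (n+1) = (M + n) + 1 := by ring
        rw [this]
        linarith
    obtain ⟨k, hk'⟩ := exists_nat_gt (z - x M)
    refine ⟨M + k, le_trans (le_max_right _ _) (Nat.le_add_right _ _), ?_⟩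
    have := hk k
    linarith
  have key : ∀ z : ℝ, x 1 ≤ z → ∃ i : ℕ, 1 ≤ i ∧ x i ≤ z ∧ z < x (i+1) := by
    intro z hz
    obtain ⟨i, hi1, hzi⟩ := hub z
    have hP : ∃ k : ℕ, z < x (k+1) := ⟨i - 1, by rwa [Nat.sub_add_cancel hi1]⟩
    have hk0 : z < x (Nat.find hP + 1) := Nat.find_spec hP
    rcases Nat.eq_zero_or_pos (Nat.find hP) with h0 | h0
    · rw [h0] at hk0
      exact absurd hk0 (not_lt.mpr hz)
    · have hmin : ¬ z < x ((Nat.find hP - 1) + 1) :=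
        Nat.find_min hP (Nat.sub_lt h0 one_pos)
      rw [Nat.sub_add_cancel h0] at hmin
      exact ⟨Nat.find hP, h0, not_lt.mp hmin, hk0⟩
  have part1 : ∀ z : ℝ, tail F1 z ≤ tail F0 z ∧ tail F0 z ≤ a * tail F1 z := by
    intro z
    rcases lt_or_ge z (x 1) with hz | hz
    · rw [ht0 z hz]
      exact ⟨le_rfl, le_mul_of_one_le_left (tail_nonneg' _ _) ha.le⟩
    · obtain ⟨i, hi1, hxi, hxi1⟩ := key z hz
      rcases lt_or_ge z (y i) with hzy | hzy
      · rw [ht1 i hi1 z hxi hzy]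
        refine ⟨tail_anti' F1 hxi, ?_⟩
        rw [hratio i hi1]
        exact mul_le_mul_of_nonneg_left (tail_anti' F1 hzy.le) (by linarith)
      · rw [ht2 i hi1 z hzy hxi1]
        exact ⟨le_rfl, le_mul_of_one_le_left (tail_nonneg' _ _) ha.le⟩
  have hbound : IsBoundedUnder (· ≤ ·) atTop (fun z => tail F0 (z - 1) / tail F0 z) := by
    have htend : Tendsto (fun z => a * (tail F1 (z-1) / tail F1 z)) atTop (nhds (a*1)) :=
      (hL1 1 one_pos).const_mul a
    refine (htend.isBoundedUnder_le).mono_le ?_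
    filter_upwards with z
    have h1 := part1 (z-1)
    have h2 := part1 z
    calc tail F0 (z - 1) / tail F0 z ≤ (a * tail F1 (z-1)) / tail F1 z := by
          apply div_le_div₀ (mul_nonneg (by linarith) (tail_nonneg' _ _)) h1.2 (hpos z) h2.1
      _ = a * (tail F1 (z-1) / tail F1 z) := mul_div_assoc _ _ _
  have hfreq : ∃ᶠ z in atTop, a ≤ tail F0 (z - 1) / tail F0 z := by
    rw [frequently_atTop]
    intro N
    have hev : ∀ᶠ i : ℕ in atTop, 1 ≤ i ∧ 1 ≤ y i - x i ∧ N - x 1 ≤ y i - x i := by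
      filter_upwards [eventually_ge_atTop 1, hgap1.eventually_ge_atTop 1,
        hgap1.eventually_ge_atTop (N - x 1)] with i h1 h2 h3
      exact ⟨h1, h2, h3⟩
    obtain ⟨i, h1, h2, h3⟩ := hev.exists
    have hx1i : x 1 ≤ x i := by
      have := hxm (i - 1)
      rwa [Nat.sub_add_cancel h1] at this
    refine ⟨y i, by linarith, ?_⟩
    have e1 : tail F0 (y i) = tail F1 (y i) := ht2 i h1 (y i) le_rfl (hxy i h1).2
    have e2 : tail F0 (y i - 1) = tail F1 (x i) := ht1 i h1 _ (by linarith) (by linarith)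
    rw [e1, e2, hratio i h1, mul_div_assoc, div_self (hpos (y i)).ne', mul_one]
  have part3 : a ≤ limsup (fun z => tail F0 (z - 1) / tail F0 z) atTop :=
    le_limsup_of_frequently_le hfreq hbound
  refine ⟨part1, ?_, part3⟩
  intro h
  have hl := (h 1 one_pos).limsup_eq
  rw [hl] at part3
  linarith
end
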